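/- With the notation of the group action B_T(V) = √(φ'(V)) B_t(φ(V)), if t and T are related by T = t.φ with φ(V) = V + a_2 V² + a_3 V³ + ..., then T_0 = t_0, T_1 = t_1 + a_2 t_0, and T_2 = t_2 + 4 a_2 (t_1 − 1) + (3 a_3 − a_2²) t_0. -/

import Mathlib

/-- Formal derivative of a power series. -/
noncomputable def d1 {R : Type*} [CommRing R] (f : PowerSeries R) : PowerSeries R :=
  PowerSeries.mk fun n => (n + 1 : ℕ) • PowerSeries.coeff (n + 1) f

/-- Composition of formal power series `f(g(V))`. -/
noncomputable def pcomp {R : Type*} [CommRing R] (f g : PowerSeries R) : PowerSeries R :=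
  PowerSeries.mk fun n => ∑ᶠ k : ℕ, PowerSeries.coeff k f * PowerSeries.coeff n (g ^ k)

/-- `B_t(v) = v - ∑_{i≥0} (t_i / i!) v^i`. -/
noncomputable def Bser {R : Type*} [CommRing R] [Algebra ℚ R] (t : ℕ → R) : PowerSeries R :=
  PowerSeries.mk fun i => (if i = 1 then (1 : R) else 0) - (i.factorial : ℚ)⁻¹ • t i

open PowerSeries

lemma aux_coeff_pow {R : Type*} [CommRing R] (φ : PowerSeries R)
    (hφ0 : constantCoeff φ = 0) {n k : ℕ} (h : n < k) : coeff n (φ^k) = 0 := by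
  obtain ⟨ψ, rfl⟩ := PowerSeries.X_dvd_iff.mpr hφ0
  rw [mul_pow, PowerSeries.coeff_mul]
  apply Finset.sum_eq_zero
  intro p hp
  rw [Finset.HasAntidiagonal.mem_antidiagonal] at hp
  rw [PowerSeries.coeff_X_pow, if_neg (by omega)]
  ring

/-- If `t` and `T` are related by `T = t.φ`, i.e.
`B_T(V) = √(φ'(V)) B_t(φ(V))`, where `φ(V) = V + a₂V² + a₃V³ + ⋯`, then
`T₀ = t₀`, `T₁ = t₁ + a₂ t₀`, and `T₂ = t₂ + 4a₂(t₁ − 1) + (3a₃ − a₂²) t₀`.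
Here `s = √(φ')` is the unique square root of `φ'` in `1 + V·R⟦V⟧`, and `Tᵢ` is read
off from `B_T` via `Tᵢ = i!(δ_{i,1} − [Vⁱ]B_T(V))`. -/
theorem action_first_coefficients {R : Type*} [CommRing R] [Algebra ℚ R]
    (φ s : PowerSeries R)
    (hφ0 : PowerSeries.constantCoeff φ = 0)
    (hφ1 : PowerSeries.coeff 1 φ = 1)
    (hs2 : s ^ 2 = d1 φ)
    (hs0 : PowerSeries.constantCoeff s = 1)
    (t T : ℕ → R)
    (hT : ∀ i, T i = (i.factorial : ℚ) •
      ((if i = 1 then (1 : R) else 0) - PowerSeries.coeff i (s * pcomp (Bser t) φ))) :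
    T 0 = t 0 ∧
    T 1 = t 1 + PowerSeries.coeff 2 φ * t 0 ∧
    T 2 = t 2 + 4 * PowerSeries.coeff 2 φ * (t 1 - 1) +
      (3 * PowerSeries.coeff 3 φ - (PowerSeries.coeff 2 φ) ^ 2) * t 0 := by
  have hc0 : coeff 0 φ = 0 := by rwa [coeff_zero_eq_constantCoeff]
  have hs00 : coeff 0 s = 1 := by rwa [coeff_zero_eq_constantCoeff]
  -- coefficients of Bser
  have hb : ∀ k, coeff k (Bser t)
      = (if k = 1 then (1:R) else 0) - (k.factorial : ℚ)⁻¹ • t k := by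
    intro k; simp [Bser]
  -- coefficients of pcomp
  have hP : ∀ n, coeff n (pcomp (Bser t) φ)
      = ∑ k ∈ Finset.range (n+1), coeff k (Bser t) * coeff n (φ^k) := by
    intro n
    rw [pcomp, PowerSeries.coeff_mk]
    apply finsum_eq_finset_sum_of_support_subset
    intro k hk
    simp only [Function.mem_support] at hk
    rw [Finset.coe_range, Set.mem_Iio]
    by_contra h
    exact hk (by rw [aux_coeff_pow φ hφ0 (by omega), mul_zero])
  have hφ22 : coeff 2 (φ^2) = 1 := by
    rw [pow_two, PowerSeries.coeff_mul, Finset.Nat.sum_antidiagonal_eq_sum_range_succ_mk]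
    simp [Finset.sum_range_succ, hc0, hφ1]
  have hP0 : coeff 0 (pcomp (Bser t) φ) = - t 0 := by
    rw [hP]; simp [hb, Nat.factorial]
  have hP1 : coeff 1 (pcomp (Bser t) φ) = 1 - t 1 := by
    rw [hP]; simp [Finset.sum_range_succ, hb, hc0, hφ1, Nat.factorial]
  have hP2 : coeff 2 (pcomp (Bser t) φ)
      = (1 - t 1) * coeff 2 φ - (2:ℚ)⁻¹ • t 2 := by
    rw [hP]
    simp [Finset.sum_range_succ, hb, hc0, hφ1, hφ22, Nat.factorial]
    ring
  -- coefficients of s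
  have h1 := congrArg (coeff 1) hs2
  rw [pow_two, PowerSeries.coeff_mul, Finset.Nat.sum_antidiagonal_eq_sum_range_succ_mk] at h1
  simp only [Finset.sum_range_succ] at h1
  simp [hs00, d1] at h1
  -- h1 : coeff 1 s + coeff 1 s = (1+1) * coeff 2 φ
  have hs1 : coeff 1 s = coeff 2 φ := by
    calc coeff 1 s = (2:ℚ)⁻¹ • ((2:ℚ) • coeff 1 s) := by rw [smul_smul]; norm_num
      _ = (2:ℚ)⁻¹ • ((2:ℚ) • coeff 2 φ) := by
          rw [two_smul, two_smul, h1]; ring_nf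
      _ = coeff 2 φ := by rw [smul_smul]; norm_num
  have h2 := congrArg (coeff 2) hs2
  rw [pow_two, PowerSeries.coeff_mul, Finset.Nat.sum_antidiagonal_eq_sum_range_succ_mk] at h2
  simp only [Finset.sum_range_succ] at h2
  simp [hs00, hs1, d1] at h2
  -- h2 : coeff 2 s + coeff 2 φ * coeff 2 φ + coeff 2 s = (2+1) * coeff 3 φ
  -- coefficients of s * pcomp
  have hm : ∀ n, coeff n (s * pcomp (Bser t) φ)
      = ∑ k ∈ Finset.range (n+1), coeff k s * coeff (n - k) (pcomp (Bser t) φ) := by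
    intro n
    rw [PowerSeries.coeff_mul, Finset.Nat.sum_antidiagonal_eq_sum_range_succ_mk]
  refine ⟨?_, ?_, ?_⟩
  · rw [hT 0]
    simp only [hm 0, Finset.sum_range_succ, Finset.sum_range_zero]
    simp [hs00, hP0]
  · rw [hT 1]
    simp only [hm 1, Finset.sum_range_succ, Finset.sum_range_zero]
    simp [hs00, hs1, hP0, hP1]
    ring
  · rw [hT 2]
    simp only [hm 2, Finset.sum_range_succ, Finset.sum_range_zero]
    rw [hs00, hs1, hP0, hP1, hP2]
    norm_num [Nat.factorial]
    rw [smul_sub, show ((2:ℚ)) • ((1/2:ℚ) • t 2) = t 2 by rw [smul_smul]; norm_num,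
      two_smul, two_smul, two_smul]
    linear_combination t 0 * h2
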